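/- Additivity with respect to tensor products (Proposition 3.6): let R¹₁, …, R¹_{N₁} be Hermitian n₁×n₁ complex matrices and R²₁, …, R²_{N₂} Hermitian n₂×n₂ complex matrices. On the composite system indexed by Fin n₁ × Fin n₂, consider the family of Hermitian matrices consisting of the R¹ₛ ⊗ I (Kronecker products with the identity on the second factor) together with the I ⊗ R²ₜ, and let C be the associated cost operator; let C₁, C₂ be the cost operators of the two families on their own systems. Then for all density matrices ρ₁, σ₁ of size n₁ and ρ₂, σ₂ of size n₂: the infimum over couplings Π between ρ₁ ⊗ ρ₂ and σ₁ ⊗ σ₂ (Kronecker products, viewed as matrices indexed by Fin n₁ × Fin n₂) of (Tr(C * Π)).re equals the infimum over couplings Π₁ between ρ₁ and σ₁ of (Tr(C₁ * Π₁)).re plus the infimum over couplings Π₂ between ρ₂ and σ₂ of (Tr(C₂ * Π₂)).re. -/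

import Mathlib

open Matrix
open scoped ComplexOrder

noncomputable section

/-- A density matrix: positive semidefinite with trace 1. -/
def IsDensity {ι : Type*} [Fintype ι] (ρ : Matrix ι ι ℂ) : Prop :=
  ρ.PosSemidef ∧ ρ.trace = 1

/-- A coupling between the quantum states `ρ` and `σ`. -/
def IsCoupling {ι : Type*} [Fintype ι] (ρ σ : Matrix ι ι ℂ)
    (P : Matrix (ι × ι) (ι × ι) ℂ) : Prop :=
  P.PosSemidef ∧ P.trace = 1 ∧
  (∀ j l, ∑ i, P (i, j) (i, l) = ρ l j) ∧
  (∀ i k, ∑ j, P (i, j) (k, j) = σ i k)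

/-- The cost operator `C = ∑ s, (Rₛ ⊗ I − I ⊗ Rₛᵀ)²` associated to a family of
Hermitian matrices. -/
def costOp {ι : Type*} [Fintype ι] [DecidableEq ι] {κ : Type*} [Fintype κ]
    (R : κ → Matrix ι ι ℂ) : Matrix (ι × ι) (ι × ι) ℂ :=
  ∑ s, (Matrix.of (fun p q : ι × ι =>
      R s p.1 q.1 * (if p.2 = q.2 then 1 else 0)
      - (if p.1 = q.1 then 1 else 0) * R s q.2 p.2)) ^ 2

open Kronecker

set_option linter.unusedSectionVars false
set_option maxHeartbeats 1000000

variable {ι₁ ι₂ : Type*} [Fintype ι₁] [Fintype ι₂] [DecidableEq ι₁] [DecidableEq ι₂]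

lemma kron_conjTranspose (A : Matrix ι₁ ι₁ ℂ) (B : Matrix ι₂ ι₂ ℂ) :
    (A ⊗ₖ B)ᴴ = Aᴴ ⊗ₖ Bᴴ := by
  ext p q
  simp [conjTranspose_apply, kroneckerMap_apply, star_mul']

open scoped MatrixOrder in
lemma PosSemidef.kron {A : Matrix ι₁ ι₁ ℂ} {B : Matrix ι₂ ι₂ ℂ}
    (hA : A.PosSemidef) (hB : B.PosSemidef) : (A ⊗ₖ B).PosSemidef := by
  obtain ⟨A', rfl⟩ := CStarAlgebra.nonneg_iff_eq_star_mul_self.mp hA.nonneg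
  obtain ⟨B', rfl⟩ := CStarAlgebra.nonneg_iff_eq_star_mul_self.mp hB.nonneg
  rw [star_eq_conjTranspose, star_eq_conjTranspose]
  have := posSemidef_conjTranspose_mul_self (A' ⊗ₖ B')
  rwa [kron_conjTranspose, ← mul_kronecker_mul] at this

lemma psd_trace_re_nonneg {M : Matrix ι₁ ι₁ ℂ} (hM : M.PosSemidef) :
    0 ≤ M.trace.re := by
  have h : ∀ i, 0 ≤ M i i := fun i => by
    simpa [dotProduct, Pi.single_apply, mulVec] using hM.dotProduct_mulVec_nonneg (Pi.single i 1)
  have : 0 ≤ M.trace := Finset.sum_nonneg fun i _ => h i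
  exact (Complex.le_def.mp this).1

open scoped MatrixOrder in
lemma trace_mul_psd_re_nonneg {C P : Matrix ι₁ ι₁ ℂ} (hC : C.PosSemidef)
    (hP : P.PosSemidef) : 0 ≤ (Matrix.trace (C * P)).re := by
  obtain ⟨B, rfl⟩ := CStarAlgebra.nonneg_iff_eq_star_mul_self.mp hC.nonneg
  rw [star_eq_conjTranspose]
  have : Matrix.trace (Bᴴ * B * P) = Matrix.trace (B * P * Bᴴ) := by
    rw [Matrix.mul_assoc, trace_mul_comm, Matrix.mul_assoc]
  rw [this]
  exact psd_trace_re_nonneg (hP.mul_mul_conjTranspose_same B)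

lemma trace_submatrix_equiv' {α β : Type*} [Fintype α] [Fintype β] (e : α ≃ β)
    (M : Matrix β β ℂ) : (M.submatrix e e).trace = M.trace := by
  simp only [Matrix.trace, Matrix.diag, submatrix_apply]
  exact e.sum_comp fun b => M b b

/-- Reshuffling equivalence. -/
def resh (ι₁ ι₂ : Type*) : (ι₁ × ι₂) × (ι₁ × ι₂) ≃ (ι₁ × ι₁) × (ι₂ × ι₂) where
  toFun p := ((p.1.1, p.2.1), (p.1.2, p.2.2))
  invFun p := ((p.1.1, p.2.1), (p.1.2, p.2.2))
  left_inv p := rfl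
  right_inv p := rfl

/-- Partial trace over the second factor. -/
def ptraceR {μ ν : Type*} [Fintype ν] (Z : Matrix (μ × ν) (μ × ν) ℂ) : Matrix μ μ ℂ :=
  Matrix.of fun p q => ∑ r, Z (p, r) (q, r)

/-- Partial trace over the first factor. -/
def ptraceL {μ ν : Type*} [Fintype μ] (Z : Matrix (μ × ν) (μ × ν) ℂ) : Matrix ν ν ℂ :=
  Matrix.of fun p q => ∑ r, Z (r, p) (r, q)

lemma ptraceR_psd {μ ν : Type*} [Fintype μ] [Fintype ν] {Z : Matrix (μ × ν) (μ × ν) ℂ}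
    (hZ : Z.PosSemidef) : (ptraceR Z).PosSemidef := by
  have : ptraceR Z = ∑ r, Z.submatrix (fun p => (p, r)) (fun p => (p, r)) := by
    ext p q; simp [ptraceR, Matrix.sum_apply]
  rw [this]
  refine Finset.sum_induction _ _ (fun a b ha hb => ha.add hb) .zero ?_
  exact fun r _ => hZ.submatrix _

lemma ptraceL_psd {μ ν : Type*} [Fintype μ] [Fintype ν] {Z : Matrix (μ × ν) (μ × ν) ℂ}
    (hZ : Z.PosSemidef) : (ptraceL Z).PosSemidef := by
  have : ptraceL Z = ∑ r, Z.submatrix (fun p => (r, p)) (fun p => (r, p)) := by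
    ext p q; simp [ptraceL, Matrix.sum_apply]
  rw [this]
  refine Finset.sum_induction _ _ (fun a b ha hb => ha.add hb) .zero ?_
  exact fun r _ => hZ.submatrix _

lemma ptraceR_trace {μ ν : Type*} [Fintype μ] [Fintype ν] (Z : Matrix (μ × ν) (μ × ν) ℂ) :
    (ptraceR Z).trace = Z.trace := by
  simp [ptraceR, Matrix.trace, Matrix.diag, Fintype.sum_prod_type]

lemma ptraceL_trace {μ ν : Type*} [Fintype μ] [Fintype ν] (Z : Matrix (μ × ν) (μ × ν) ℂ) :
    (ptraceL Z).trace = Z.trace := by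
  simp only [ptraceL, Matrix.trace, Matrix.diag, Matrix.of_apply, Fintype.sum_prod_type]
  exact Finset.sum_comm

lemma trace_kron_one_mul {μ ν : Type*} [Fintype μ] [Fintype ν] [DecidableEq ν]
    (Y : Matrix μ μ ℂ) (Z : Matrix (μ × ν) (μ × ν) ℂ) :
    Matrix.trace ((Y ⊗ₖ (1 : Matrix ν ν ℂ)) * Z) = Matrix.trace (Y * ptraceR Z) := by
  simp only [Matrix.trace, Matrix.diag, mul_apply, Fintype.sum_prod_type,
    kroneckerMap_apply, one_apply, ptraceR, Matrix.of_apply, mul_ite, mul_one, mul_zero,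
    ite_mul, zero_mul, Finset.sum_ite_eq', Finset.mem_univ, if_true, Finset.mul_sum]
  refine Finset.sum_congr rfl fun x _ => ?_
  rw [Finset.sum_comm]
  refine Finset.sum_congr rfl fun x2 _ => ?_
  simp [Finset.sum_ite_eq]

lemma trace_one_kron_mul {μ ν : Type*} [Fintype μ] [Fintype ν] [DecidableEq μ]
    (Y : Matrix ν ν ℂ) (Z : Matrix (μ × ν) (μ × ν) ℂ) :
    Matrix.trace (((1 : Matrix μ μ ℂ) ⊗ₖ Y) * Z) = Matrix.trace (Y * ptraceL Z) := by
  simp only [Matrix.trace, Matrix.diag, mul_apply, Fintype.sum_prod_type,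
    kroneckerMap_apply, one_apply, ptraceL, Matrix.of_apply, mul_ite, mul_one, mul_zero,
    ite_mul, zero_mul, Finset.sum_ite_eq', Finset.mem_univ, if_true, Finset.mul_sum]
  have h1 : ∀ x : μ, ∀ x₁ : ν,
      (∑ x₂ : μ, ∑ x₃ : ν, if x = x₂ then 1 * Y x₁ x₃ * Z (x₂, x₃) (x, x₁) else 0)
        = ∑ x₃ : ν, Y x₁ x₃ * Z (x, x₃) (x, x₁) := by
    intro x x₁
    rw [Finset.sum_comm]
    simp [Finset.sum_ite_eq]
  simp only [h1]
  rw [Finset.sum_comm]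
  refine Finset.sum_congr rfl fun a _ => ?_
  rw [Finset.sum_comm]

/-- A single cost term. -/
def cterm {ι : Type*} [Fintype ι] [DecidableEq ι] (R : Matrix ι ι ℂ) :
    Matrix (ι × ι) (ι × ι) ℂ :=
  Matrix.of (fun p q : ι × ι =>
      R p.1 q.1 * (if p.2 = q.2 then 1 else 0)
      - (if p.1 = q.1 then 1 else 0) * R q.2 p.2)

lemma cterm_isHermitian {ι : Type*} [Fintype ι] [DecidableEq ι] {R : Matrix ι ι ℂ}
    (hR : R.IsHermitian) : (cterm R).IsHermitian := by
  have hs : ∀ a b, star (R a b) = R b a := fun a b => by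
    conv_rhs => rw [← hR]
    simp
  have hite : ∀ (c : Prop) [Decidable c], star (ite c (1:ℂ) 0) = ite c 1 0 := by
    intros c _; split <;> simp
  ext ⟨p1,p2⟩ ⟨q1,q2⟩
  simp only [cterm, conjTranspose_apply, Matrix.of_apply, star_sub, star_mul', hs, hite]
  by_cases h1 : p1 = q1 <;> by_cases h2 : p2 = q2 <;>
    simp [h1, h2, eq_comm]

lemma costOp_eq {ι : Type*} [Fintype ι] [DecidableEq ι] {κ : Type*} [Fintype κ]
    (R : κ → Matrix ι ι ℂ) : costOp R = ∑ s, (cterm (R s)) ^ 2 := rfl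

lemma costOp_posSemidef {ι : Type*} [Fintype ι] [DecidableEq ι] {κ : Type*} [Fintype κ]
    {R : κ → Matrix ι ι ℂ} (hR : ∀ s, (R s).IsHermitian) : (costOp R).PosSemidef := by
  rw [costOp_eq]
  refine Finset.sum_induction _ _ (fun a b ha hb => ha.add hb) .zero fun s _ => ?_
  have h := cterm_isHermitian (hR s)
  have h2 : (cterm (R s)) ^ 2 = (cterm (R s))ᴴ * cterm (R s) := by rw [h.eq, pow_two]
  rw [h2]
  exact posSemidef_conjTranspose_mul_self _

lemma exists_coupling {ι : Type*} [Fintype ι] [DecidableEq ι] {ρ σ : Matrix ι ι ℂ}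
    (hρ : IsDensity ρ) (hσ : IsDensity σ) :
    IsCoupling ρ σ (Matrix.of fun p q : ι × ι => σ p.1 q.1 * ρ q.2 p.2) := by
  have hk : (Matrix.of fun p q : ι × ι => σ p.1 q.1 * ρ q.2 p.2) = σ ⊗ₖ ρᵀ := by
    ext p q; simp [kroneckerMap_apply]
  refine ⟨?_, ?_, ?_, ?_⟩
  · rw [hk]; exact PosSemidef.kron hσ.1 hρ.1.transpose
  · rw [hk, trace_kronecker, trace_transpose, hσ.2, hρ.2, one_mul]
  · intro j l
    simp only [Matrix.of_apply]
    rw [← Finset.sum_mul]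
    have : ∑ i, σ i i = σ.trace := rfl
    rw [this, hσ.2, one_mul]
  · intro i k
    simp only [Matrix.of_apply]
    rw [← Finset.mul_sum]
    have : ∑ j, ρ j j = ρ.trace := rfl
    rw [this, hρ.2, mul_one]

lemma cterm_kron_left (R : Matrix ι₁ ι₁ ℂ) :
    cterm (R ⊗ₖ (1 : Matrix ι₂ ι₂ ℂ))
      = ((cterm R) ⊗ₖ (1 : Matrix (ι₂ × ι₂) (ι₂ × ι₂) ℂ)).submatrix (resh ι₁ ι₂) (resh ι₁ ι₂) := by
  ext ⟨⟨a,b⟩,⟨c,d⟩⟩ ⟨⟨a',b'⟩,⟨c',d'⟩⟩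
  simp only [cterm, Matrix.of_apply, submatrix_apply, resh, Equiv.coe_fn_mk,
    kroneckerMap_apply, one_apply, Prod.mk.injEq]
  by_cases h1 : a = a' <;> by_cases h2 : b = b' <;> by_cases h3 : c = c' <;>
    by_cases h4 : d = d' <;> simp [h1, h2, h3, h4] <;>
      first | ring1 | (intro h; subst h; simp_all)

lemma cterm_kron_right (R : Matrix ι₂ ι₂ ℂ) :
    cterm ((1 : Matrix ι₁ ι₁ ℂ) ⊗ₖ R)
      = (((1 : Matrix (ι₁ × ι₁) (ι₁ × ι₁) ℂ)) ⊗ₖ (cterm R)).submatrix (resh ι₁ ι₂) (resh ι₁ ι₂) := by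
  ext ⟨⟨a,b⟩,⟨c,d⟩⟩ ⟨⟨a',b'⟩,⟨c',d'⟩⟩
  simp only [cterm, Matrix.of_apply, submatrix_apply, resh, Equiv.coe_fn_mk,
    kroneckerMap_apply, one_apply, Prod.mk.injEq]
  by_cases h1 : a = a' <;> by_cases h2 : b = b' <;> by_cases h3 : c = c' <;>
    by_cases h4 : d = d' <;> simp [h1, h2, h3, h4] <;>
      first | ring1 | (intro h; subst h; simp_all)

lemma costOp_sum_elim {κ₁ κ₂ : Type*} [Fintype κ₁] [Fintype κ₂]
    (R₁ : κ₁ → Matrix ι₁ ι₁ ℂ) (R₂ : κ₂ → Matrix ι₂ ι₂ ℂ) :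
    costOp (Sum.elim (fun s => R₁ s ⊗ₖ (1 : Matrix ι₂ ι₂ ℂ))
        (fun t => (1 : Matrix ι₁ ι₁ ℂ) ⊗ₖ R₂ t))
      = ((costOp R₁ ⊗ₖ (1 : Matrix (ι₂ × ι₂) (ι₂ × ι₂) ℂ))
          + ((1 : Matrix (ι₁ × ι₁) (ι₁ × ι₁) ℂ) ⊗ₖ costOp R₂)).submatrix
            (resh ι₁ ι₂) (resh ι₁ ι₂) := by
  have sq_sub : ∀ X : Matrix ((ι₁ × ι₁) × (ι₂ × ι₂)) ((ι₁ × ι₁) × (ι₂ × ι₂)) ℂ,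
      (X.submatrix (resh ι₁ ι₂) (resh ι₁ ι₂)) ^ 2
        = (X ^ 2).submatrix (resh ι₁ ι₂) (resh ι₁ ι₂) := fun X => by
    rw [pow_two, pow_two, submatrix_mul_equiv]
  have kron_sq_l : ∀ A : Matrix (ι₁ × ι₁) (ι₁ × ι₁) ℂ,
      (A ⊗ₖ (1 : Matrix (ι₂ × ι₂) (ι₂ × ι₂) ℂ)) ^ 2 = (A ^ 2) ⊗ₖ 1 := fun A => by
    rw [pow_two, pow_two, ← mul_kronecker_mul, Matrix.one_mul]
  have kron_sq_r : ∀ A : Matrix (ι₂ × ι₂) (ι₂ × ι₂) ℂ,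
      ((1 : Matrix (ι₁ × ι₁) (ι₁ × ι₁) ℂ) ⊗ₖ A) ^ 2 = 1 ⊗ₖ (A ^ 2) := fun A => by
    rw [pow_two, pow_two, ← mul_kronecker_mul, Matrix.one_mul]
  rw [costOp_eq, Fintype.sum_sum_type]
  simp only [Sum.elim_inl, Sum.elim_inr, cterm_kron_left, cterm_kron_right, sq_sub,
    kron_sq_l, kron_sq_r]
  ext p q
  simp [Matrix.sum_apply, submatrix_apply, kroneckerMap_apply, costOp_eq,
    Finset.sum_mul, Finset.mul_sum, Matrix.add_apply]

lemma sum3_comm {α β γ : Type*} [Fintype α] [Fintype β] [Fintype γ] (F : α → β → γ → ℂ) :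
    ∑ a, ∑ b, ∑ c, F a b c = ∑ c, ∑ a, ∑ b, F a b c :=
  calc ∑ a, ∑ b, ∑ c, F a b c = ∑ a, ∑ c, ∑ b, F a b c :=
        Finset.sum_congr rfl fun _ _ => Finset.sum_comm
    _ = ∑ c, ∑ a, ∑ b, F a b c := Finset.sum_comm

lemma cost_trace_split {κ₁ κ₂ : Type*} [Fintype κ₁] [Fintype κ₂]
    (R₁ : κ₁ → Matrix ι₁ ι₁ ℂ) (R₂ : κ₂ → Matrix ι₂ ι₂ ℂ)
    (P : Matrix ((ι₁ × ι₂) × (ι₁ × ι₂)) ((ι₁ × ι₂) × (ι₁ × ι₂)) ℂ) :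
    Matrix.trace (costOp (Sum.elim (fun s => R₁ s ⊗ₖ (1 : Matrix ι₂ ι₂ ℂ))
        (fun t => (1 : Matrix ι₁ ι₁ ℂ) ⊗ₖ R₂ t)) * P)
      = Matrix.trace (costOp R₁
            * ptraceR (P.submatrix (resh ι₁ ι₂).symm (resh ι₁ ι₂).symm))
        + Matrix.trace (costOp R₂
            * ptraceL (P.submatrix (resh ι₁ ι₂).symm (resh ι₁ ι₂).symm)) := by
  set e := resh ι₁ ι₂
  have hP : P = (P.submatrix e.symm e.symm).submatrix e e := by
    ext p q; simp
  rw [costOp_sum_elim]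
  conv_lhs => rw [hP]
  rw [submatrix_mul_equiv, trace_submatrix_equiv', Matrix.add_mul, trace_add,
    trace_kron_one_mul, trace_one_kron_mul]

lemma marginal_coupling_left {ρ₁ σ₁ : Matrix ι₁ ι₁ ℂ} {ρ₂ σ₂ : Matrix ι₂ ι₂ ℂ}
    (hρ₂ : ρ₂.trace = 1) (hσ₂ : σ₂.trace = 1)
    {P : Matrix ((ι₁ × ι₂) × (ι₁ × ι₂)) ((ι₁ × ι₂) × (ι₁ × ι₂)) ℂ}
    (h : IsCoupling (ρ₁ ⊗ₖ ρ₂) (σ₁ ⊗ₖ σ₂) P) :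
    IsCoupling ρ₁ σ₁ (ptraceR (P.submatrix (resh ι₁ ι₂).symm (resh ι₁ ι₂).symm)) := by
  have hE : ∀ p q : ι₁ × ι₁,
      ptraceR (P.submatrix (resh ι₁ ι₂).symm (resh ι₁ ι₂).symm) p q
        = ∑ b : ι₂, ∑ d : ι₂, P ((p.1, b), (p.2, d)) ((q.1, b), (q.2, d)) := by
    intro p q
    simp [ptraceR, resh, Fintype.sum_prod_type]
  refine ⟨ptraceR_psd (h.1.submatrix _), ?_, ?_, ?_⟩
  · rw [ptraceR_trace, trace_submatrix_equiv', h.2.1]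
  · intro j l
    have key : ∀ d : ι₂, ∑ I : ι₁ × ι₂, P (I, (j, d)) (I, (l, d)) = ρ₁ l j * ρ₂ d d :=
      fun d => by simpa [kroneckerMap_apply] using h.2.2.1 (j, d) (l, d)
    calc ∑ i, ptraceR (P.submatrix (resh ι₁ ι₂).symm (resh ι₁ ι₂).symm) (i, j) (i, l)
        = ∑ i, ∑ b, ∑ d, P ((i, b), (j, d)) ((i, b), (l, d)) := by simp_rw [hE]
      _ = ∑ d, ∑ i, ∑ b, P ((i, b), (j, d)) ((i, b), (l, d)) := sum3_comm _
      _ = ∑ d, ρ₁ l j * ρ₂ d d := by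
          refine Finset.sum_congr rfl fun d _ => ?_
          rw [← key d, Fintype.sum_prod_type]
      _ = ρ₁ l j := by
          rw [← Finset.mul_sum]
          have : ∑ d, ρ₂ d d = ρ₂.trace := rfl
          rw [this, hρ₂, mul_one]
  · intro i k
    have key : ∀ b : ι₂, ∑ J : ι₁ × ι₂, P ((i, b), J) ((k, b), J) = σ₁ i k * σ₂ b b :=
      fun b => by simpa [kroneckerMap_apply] using h.2.2.2 (i, b) (k, b)
    calc ∑ j, ptraceR (P.submatrix (resh ι₁ ι₂).symm (resh ι₁ ι₂).symm) (i, j) (k, j)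
        = ∑ j, ∑ b, ∑ d, P ((i, b), (j, d)) ((k, b), (j, d)) := by simp_rw [hE]
      _ = ∑ b, ∑ j, ∑ d, P ((i, b), (j, d)) ((k, b), (j, d)) := Finset.sum_comm
      _ = ∑ b, σ₁ i k * σ₂ b b := by
          refine Finset.sum_congr rfl fun b _ => ?_
          rw [← key b, Fintype.sum_prod_type]
      _ = σ₁ i k := by
          rw [← Finset.mul_sum]
          have : ∑ b, σ₂ b b = σ₂.trace := rfl
          rw [this, hσ₂, mul_one]

lemma marginal_coupling_right {ρ₁ σ₁ : Matrix ι₁ ι₁ ℂ} {ρ₂ σ₂ : Matrix ι₂ ι₂ ℂ}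
    (hρ₁ : ρ₁.trace = 1) (hσ₁ : σ₁.trace = 1)
    {P : Matrix ((ι₁ × ι₂) × (ι₁ × ι₂)) ((ι₁ × ι₂) × (ι₁ × ι₂)) ℂ}
    (h : IsCoupling (ρ₁ ⊗ₖ ρ₂) (σ₁ ⊗ₖ σ₂) P) :
    IsCoupling ρ₂ σ₂ (ptraceL (P.submatrix (resh ι₁ ι₂).symm (resh ι₁ ι₂).symm)) := by
  have hE : ∀ p q : ι₂ × ι₂,
      ptraceL (P.submatrix (resh ι₁ ι₂).symm (resh ι₁ ι₂).symm) p q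
        = ∑ a : ι₁, ∑ c : ι₁, P ((a, p.1), (c, p.2)) ((a, q.1), (c, q.2)) := by
    intro p q
    simp [ptraceL, resh, Fintype.sum_prod_type]
  refine ⟨ptraceL_psd (h.1.submatrix _), ?_, ?_, ?_⟩
  · rw [ptraceL_trace, trace_submatrix_equiv', h.2.1]
  · intro j l
    have key : ∀ c : ι₁, ∑ I : ι₁ × ι₂, P (I, (c, j)) (I, (c, l)) = ρ₁ c c * ρ₂ l j :=
      fun c => by simpa [kroneckerMap_apply] using h.2.2.1 (c, j) (c, l)
    calc ∑ i, ptraceL (P.submatrix (resh ι₁ ι₂).symm (resh ι₁ ι₂).symm) (i, j) (i, l)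
        = ∑ i, ∑ a, ∑ c, P ((a, i), (c, j)) ((a, i), (c, l)) := by simp_rw [hE]
      _ = ∑ c, ∑ i, ∑ a, P ((a, i), (c, j)) ((a, i), (c, l)) := sum3_comm _
      _ = ∑ c, ∑ a, ∑ i, P ((a, i), (c, j)) ((a, i), (c, l)) :=
          Finset.sum_congr rfl fun _ _ => Finset.sum_comm
      _ = ∑ c, ρ₁ c c * ρ₂ l j := by
          refine Finset.sum_congr rfl fun c _ => ?_
          rw [← key c, Fintype.sum_prod_type]
      _ = ρ₂ l j := by
          rw [← Finset.sum_mul]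
          have : ∑ c, ρ₁ c c = ρ₁.trace := rfl
          rw [this, hρ₁, one_mul]
  · intro i k
    have key : ∀ a : ι₁, ∑ J : ι₁ × ι₂, P ((a, i), J) ((a, k), J) = σ₁ a a * σ₂ i k :=
      fun a => by simpa [kroneckerMap_apply] using h.2.2.2 (a, i) (a, k)
    calc ∑ j, ptraceL (P.submatrix (resh ι₁ ι₂).symm (resh ι₁ ι₂).symm) (i, j) (k, j)
        = ∑ j, ∑ a, ∑ c, P ((a, i), (c, j)) ((a, k), (c, j)) := by simp_rw [hE]
      _ = ∑ a, ∑ j, ∑ c, P ((a, i), (c, j)) ((a, k), (c, j)) := Finset.sum_comm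
      _ = ∑ a, ∑ c, ∑ j, P ((a, i), (c, j)) ((a, k), (c, j)) :=
          Finset.sum_congr rfl fun _ _ => Finset.sum_comm
      _ = ∑ a, σ₁ a a * σ₂ i k := by
          refine Finset.sum_congr rfl fun a _ => ?_
          rw [← key a, Fintype.sum_prod_type]
      _ = σ₂ i k := by
          rw [← Finset.sum_mul]
          have : ∑ a, σ₁ a a = σ₁.trace := rfl
          rw [this, hσ₁, one_mul]

lemma ptraceR_kron (A : Matrix (ι₁ × ι₁) (ι₁ × ι₁) ℂ) (B : Matrix (ι₂ × ι₂) (ι₂ × ι₂) ℂ) :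
    ptraceR (A ⊗ₖ B) = B.trace • A := by
  ext p q
  simp only [ptraceR, Matrix.of_apply, kroneckerMap_apply, Matrix.smul_apply, Matrix.trace,
    Matrix.diag, smul_eq_mul, ← Finset.mul_sum]
  try ring

lemma ptraceL_kron (A : Matrix (ι₁ × ι₁) (ι₁ × ι₁) ℂ) (B : Matrix (ι₂ × ι₂) (ι₂ × ι₂) ℂ) :
    ptraceL (A ⊗ₖ B) = A.trace • B := by
  ext p q
  simp only [ptraceL, Matrix.of_apply, kroneckerMap_apply, Matrix.smul_apply, Matrix.trace,
    Matrix.diag, smul_eq_mul, ← Finset.sum_mul]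
  try ring

lemma kron_resymm (A : Matrix (ι₁ × ι₁) (ι₁ × ι₁) ℂ) (B : Matrix (ι₂ × ι₂) (ι₂ × ι₂) ℂ) :
    ((A ⊗ₖ B).submatrix (resh ι₁ ι₂) (resh ι₁ ι₂)).submatrix
      (resh ι₁ ι₂).symm (resh ι₁ ι₂).symm = A ⊗ₖ B := by
  ext p q; simp

lemma product_coupling {ρ₁ σ₁ : Matrix ι₁ ι₁ ℂ} {ρ₂ σ₂ : Matrix ι₂ ι₂ ℂ}
    {P₁ : Matrix (ι₁ × ι₁) (ι₁ × ι₁) ℂ} {P₂ : Matrix (ι₂ × ι₂) (ι₂ × ι₂) ℂ}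
    (h₁ : IsCoupling ρ₁ σ₁ P₁) (h₂ : IsCoupling ρ₂ σ₂ P₂) :
    IsCoupling (ρ₁ ⊗ₖ ρ₂) (σ₁ ⊗ₖ σ₂)
      ((P₁ ⊗ₖ P₂).submatrix (resh ι₁ ι₂) (resh ι₁ ι₂)) := by
  refine ⟨(PosSemidef.kron h₁.1 h₂.1).submatrix _, ?_, ?_, ?_⟩
  · rw [trace_submatrix_equiv', trace_kronecker, h₁.2.1, h₂.2.1, one_mul]
  · rintro ⟨j₁, j₂⟩ ⟨l₁, l₂⟩
    calc ∑ I : ι₁ × ι₂, ((P₁ ⊗ₖ P₂).submatrix (resh ι₁ ι₂) (resh ι₁ ι₂))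
            (I, (j₁, j₂)) (I, (l₁, l₂))
        = ∑ i₁, ∑ i₂, P₁ (i₁, j₁) (i₁, l₁) * P₂ (i₂, j₂) (i₂, l₂) := by
          simp [Fintype.sum_prod_type, resh, kroneckerMap_apply]
      _ = (∑ i₁, P₁ (i₁, j₁) (i₁, l₁)) * ∑ i₂, P₂ (i₂, j₂) (i₂, l₂) :=
          (Finset.sum_mul_sum _ _ _ _).symm
      _ = (ρ₁ ⊗ₖ ρ₂) (l₁, l₂) (j₁, j₂) := by
          rw [h₁.2.2.1, h₂.2.2.1]; simp [kroneckerMap_apply]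
  · rintro ⟨i₁, i₂⟩ ⟨k₁, k₂⟩
    calc ∑ J : ι₁ × ι₂, ((P₁ ⊗ₖ P₂).submatrix (resh ι₁ ι₂) (resh ι₁ ι₂))
            ((i₁, i₂), J) ((k₁, k₂), J)
        = ∑ j₁, ∑ j₂, P₁ (i₁, j₁) (k₁, j₁) * P₂ (i₂, j₂) (k₂, j₂) := by
          simp [Fintype.sum_prod_type, resh, kroneckerMap_apply]
      _ = (∑ j₁, P₁ (i₁, j₁) (k₁, j₁)) * ∑ j₂, P₂ (i₂, j₂) (k₂, j₂) :=
          (Finset.sum_mul_sum _ _ _ _).symm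
      _ = (σ₁ ⊗ₖ σ₂) (i₁, i₂) (k₁, k₂) := by
          rw [h₁.2.2.2, h₂.2.2.2]; simp [kroneckerMap_apply]

/-- **Additivity with respect to tensor products** (Proposition 3.6). -/
theorem additivity_tensor_product {n₁ n₂ N₁ N₂ : ℕ}
    (R₁ : Fin N₁ → Matrix (Fin n₁) (Fin n₁) ℂ) (hR₁ : ∀ s, (R₁ s).IsHermitian)
    (R₂ : Fin N₂ → Matrix (Fin n₂) (Fin n₂) ℂ) (hR₂ : ∀ t, (R₂ t).IsHermitian)
    (ρ₁ σ₁ : Matrix (Fin n₁) (Fin n₁) ℂ) (hρ₁ : IsDensity ρ₁) (hσ₁ : IsDensity σ₁)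
    (ρ₂ σ₂ : Matrix (Fin n₂) (Fin n₂) ℂ) (hρ₂ : IsDensity ρ₂) (hσ₂ : IsDensity σ₂) :
    sInf {x : ℝ | ∃ P, IsCoupling (ρ₁ ⊗ₖ ρ₂) (σ₁ ⊗ₖ σ₂) P ∧
        x = (Matrix.trace (costOp
          (Sum.elim (fun s => R₁ s ⊗ₖ (1 : Matrix (Fin n₂) (Fin n₂) ℂ))
                    (fun t => (1 : Matrix (Fin n₁) (Fin n₁) ℂ) ⊗ₖ R₂ t)) * P)).re}
      = sInf {x : ℝ | ∃ P₁, IsCoupling ρ₁ σ₁ P₁ ∧ x = (Matrix.trace (costOp R₁ * P₁)).re}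
        + sInf {x : ℝ | ∃ P₂, IsCoupling ρ₂ σ₂ P₂ ∧ x = (Matrix.trace (costOp R₂ * P₂)).re} := by
  set F := Sum.elim (fun s => R₁ s ⊗ₖ (1 : Matrix (Fin n₂) (Fin n₂) ℂ))
      (fun t => (1 : Matrix (Fin n₁) (Fin n₁) ℂ) ⊗ₖ R₂ t) with hF
  set A := {x : ℝ | ∃ P, IsCoupling (ρ₁ ⊗ₖ ρ₂) (σ₁ ⊗ₖ σ₂) P ∧
      x = (Matrix.trace (costOp F * P)).re} with hA
  set B₁ := {x : ℝ | ∃ P₁, IsCoupling ρ₁ σ₁ P₁ ∧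
      x = (Matrix.trace (costOp R₁ * P₁)).re} with hB₁
  set B₂ := {x : ℝ | ∃ P₂, IsCoupling ρ₂ σ₂ P₂ ∧
      x = (Matrix.trace (costOp R₂ * P₂)).re} with hB₂
  have hFH : ∀ s, (F s).IsHermitian := by
    rintro (s | t)
    · show ((R₁ s ⊗ₖ (1 : Matrix (Fin n₂) (Fin n₂) ℂ))).IsHermitian
      unfold Matrix.IsHermitian
      rw [kron_conjTranspose, (hR₁ s).eq, conjTranspose_one]
    · show (((1 : Matrix (Fin n₁) (Fin n₁) ℂ) ⊗ₖ R₂ t)).IsHermitian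
      unfold Matrix.IsHermitian
      rw [kron_conjTranspose, (hR₂ t).eq, conjTranspose_one]
  have hCb : (costOp F).PosSemidef := costOp_posSemidef hFH
  have hC₁ : (costOp R₁).PosSemidef := costOp_posSemidef hR₁
  have hC₂ : (costOp R₂).PosSemidef := costOp_posSemidef hR₂
  -- nonnegativity and bounded below
  have hAnn : ∀ x ∈ A, (0:ℝ) ≤ x := by
    rintro x ⟨P, hP, rfl⟩; exact trace_mul_psd_re_nonneg hCb hP.1
  have hB₁nn : ∀ x ∈ B₁, (0:ℝ) ≤ x := by
    rintro x ⟨P, hP, rfl⟩; exact trace_mul_psd_re_nonneg hC₁ hP.1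
  have hB₂nn : ∀ x ∈ B₂, (0:ℝ) ≤ x := by
    rintro x ⟨P, hP, rfl⟩; exact trace_mul_psd_re_nonneg hC₂ hP.1
  have hAbdd : BddBelow A := ⟨0, fun x hx => hAnn x hx⟩
  have hB₁bdd : BddBelow B₁ := ⟨0, fun x hx => hB₁nn x hx⟩
  have hB₂bdd : BddBelow B₂ := ⟨0, fun x hx => hB₂nn x hx⟩
  -- nonemptiness
  have hc₁ := exists_coupling hρ₁ hσ₁
  have hc₂ := exists_coupling hρ₂ hσ₂
  have hB₁ne : B₁.Nonempty := ⟨_, _, hc₁, rfl⟩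
  have hB₂ne : B₂.Nonempty := ⟨_, _, hc₂, rfl⟩
  -- product coupling: sums of members of B₁ and B₂ are in A
  have hprod : ∀ b₁ ∈ B₁, ∀ b₂ ∈ B₂, b₁ + b₂ ∈ A := by
    rintro b₁ ⟨P₁, hP₁, rfl⟩ b₂ ⟨P₂, hP₂, rfl⟩
    refine ⟨(P₁ ⊗ₖ P₂).submatrix (resh (Fin n₁) (Fin n₂)) (resh (Fin n₁) (Fin n₂)),
      product_coupling hP₁ hP₂, ?_⟩
    rw [cost_trace_split, kron_resymm, ptraceR_kron, ptraceL_kron,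
      hP₂.2.1, hP₁.2.1, one_smul, one_smul, Complex.add_re]
  have hAne : A.Nonempty := ⟨_, hprod _ ⟨_, hc₁, rfl⟩ _ ⟨_, hc₂, rfl⟩⟩
  -- splitting: every member of A is a sum of members of B₁ and B₂
  have hsplit : ∀ x ∈ A, ∃ b₁ ∈ B₁, ∃ b₂ ∈ B₂, x = b₁ + b₂ := by
    rintro x ⟨P, hP, rfl⟩
    refine ⟨_, ⟨_, marginal_coupling_left hρ₂.2 hσ₂.2 hP, rfl⟩,
      _, ⟨_, marginal_coupling_right hρ₁.2 hσ₁.2 hP, rfl⟩, ?_⟩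
    rw [cost_trace_split, Complex.add_re]
  refine le_antisymm ?_ ?_
  · have h : ∀ b₁ ∈ B₁, ∀ b₂ ∈ B₂, sInf A ≤ b₁ + b₂ := fun b₁ h₁ b₂ h₂ =>
      csInf_le hAbdd (hprod b₁ h₁ b₂ h₂)
    have h1 : ∀ b₂ ∈ B₂, sInf A - b₂ ≤ sInf B₁ := fun b₂ hb₂ =>
      le_csInf hB₁ne fun b₁ hb₁ => by linarith [h b₁ hb₁ b₂ hb₂]
    have h2 : sInf A - sInf B₁ ≤ sInf B₂ :=
      le_csInf hB₂ne fun b₂ hb₂ => by linarith [h1 b₂ hb₂]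
    linarith
  · refine le_csInf hAne fun x hx => ?_
    obtain ⟨b₁, hb₁, b₂, hb₂, rfl⟩ := hsplit x hx
    have := csInf_le hB₁bdd hb₁
    have := csInf_le hB₂bdd hb₂
    linarith
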